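/- If R ∈ A⊗A⊗A satisfies R¹⊗aR²⊗R³ = R¹⊗R²⊗R³a for all a ∈ A, R¹R²⊗R³ = 1⊗1 and R²⊗R³R¹ = 1⊗1, then R¹⊗1⊗R²⊗R³ = R¹⊗R²r¹⊗r²⊗R³r³ in A⊗A⊗A⊗A, where r is a second copy of R. -/

import Mathlib

open TensorProduct

/-- If `R ∈ A ⊗ A ⊗ A` satisfies `R¹ ⊗ aR² ⊗ R³ = R¹ ⊗ R² ⊗ R³a` for all
`a ∈ A`, `R¹R² ⊗ R³ = 1 ⊗ 1` and `R² ⊗ R³R¹ = 1 ⊗ 1`, then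
`R¹ ⊗ 1 ⊗ R² ⊗ R³ = R¹ ⊗ R²r¹ ⊗ r² ⊗ R³r³` in `A ⊗ A ⊗ A ⊗ A`, where `r` is a second
copy of `R`. -/
theorem second_hexagon_identity_of_R_matrix
    (k A : Type*) [CommRing k] [Ring A] [Algebra k A]
    (ι : Type*) (s : Finset ι) (x y z : ι → A)
    (hcen : ∀ a : A,
      ∑ i ∈ s, x i ⊗ₜ[k] (a * y i) ⊗ₜ[k] z i
        = ∑ i ∈ s, x i ⊗ₜ[k] y i ⊗ₜ[k] (z i * a))
    (hnorm1 : ∑ i ∈ s, (x i * y i) ⊗ₜ[k] z i = (1 : A) ⊗ₜ[k] (1 : A))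
    (hnorm2 : ∑ i ∈ s, y i ⊗ₜ[k] (z i * x i) = (1 : A) ⊗ₜ[k] (1 : A)) :
    ∑ i ∈ s, x i ⊗ₜ[k] (1 : A) ⊗ₜ[k] y i ⊗ₜ[k] z i
      = ∑ i ∈ s, ∑ j ∈ s,
          x i ⊗ₜ[k] (y i * x j) ⊗ₜ[k] y j ⊗ₜ[k] (z i * z j) := by
  classical
  -- Step 1: for each `j`, use `hcen (z j)` to move `z j` from the fourth slot to the second.
  have step1 : ∀ j : ι,
      ∑ i ∈ s, x i ⊗ₜ[k] (y i * x j) ⊗ₜ[k] y j ⊗ₜ[k] (z i * z j)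
        = ∑ i ∈ s, x i ⊗ₜ[k] (z j * (y i * x j)) ⊗ₜ[k] y j ⊗ₜ[k] z i := by
    intro j
    have h := congrArg
      (TensorProduct.map
        (((TensorProduct.mk k (A ⊗[k] A) A).flip (y j)).comp
          (TensorProduct.map (LinearMap.id : A →ₗ[k] A) (LinearMap.mulRight k (x j))))
        (LinearMap.id : A →ₗ[k] A))
      (hcen (z j))
    simpa [map_sum, mul_assoc] using h.symm
  -- Step 2: for each `i`, use `hcen (y i)` to move `y i` from the second slot to the third.
  have step2 : ∀ i : ι,
      ∑ j ∈ s, x i ⊗ₜ[k] (z j * (y i * x j)) ⊗ₜ[k] y j ⊗ₜ[k] z i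
        = ∑ j ∈ s, x i ⊗ₜ[k] (z j * x j) ⊗ₜ[k] (y i * y j) ⊗ₜ[k] z i := by
    intro i
    have h := congrArg
      (((TensorProduct.mk k ((A ⊗[k] A) ⊗[k] A) A).flip (z i)).comp
        ((TensorProduct.map (TensorProduct.mk k A A (x i)) (LinearMap.id : A →ₗ[k] A)).comp
          ((TensorProduct.map
              ((LinearMap.mul' k A).comp (TensorProduct.comm k A A).toLinearMap)
              (LinearMap.id : A →ₗ[k] A)).comp
            (((TensorProduct.assoc k A A A).symm.toLinearMap).comp
              ((TensorProduct.map (LinearMap.id : A →ₗ[k] A)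
                (TensorProduct.comm k A A).toLinearMap).comp
                (TensorProduct.assoc k A A A).toLinearMap)))))
      (hcen (y i))
    simpa [map_sum, mul_assoc] using h.symm
  -- Step 3: for each `i`, use `hnorm2` to collapse the double sum.
  have step3 : ∀ i : ι,
      ∑ j ∈ s, x i ⊗ₜ[k] (z j * x j) ⊗ₜ[k] (y i * y j) ⊗ₜ[k] z i
        = x i ⊗ₜ[k] (1 : A) ⊗ₜ[k] y i ⊗ₜ[k] z i := by
    intro i
    have h := congrArg
      (((TensorProduct.mk k ((A ⊗[k] A) ⊗[k] A) A).flip (z i)).comp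
        ((TensorProduct.map (TensorProduct.mk k A A (x i))
            (LinearMap.mulLeft k (y i))).comp
          (TensorProduct.comm k A A).toLinearMap))
      hnorm2
    simpa [map_sum] using h
  have main : ∑ i ∈ s, ∑ j ∈ s,
      x i ⊗ₜ[k] (y i * x j) ⊗ₜ[k] y j ⊗ₜ[k] (z i * z j)
        = ∑ i ∈ s, x i ⊗ₜ[k] (1 : A) ⊗ₜ[k] y i ⊗ₜ[k] z i := by
    rw [Finset.sum_comm]
    calc ∑ j ∈ s, ∑ i ∈ s, x i ⊗ₜ[k] (y i * x j) ⊗ₜ[k] y j ⊗ₜ[k] (z i * z j)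
        = ∑ j ∈ s, ∑ i ∈ s, x i ⊗ₜ[k] (z j * (y i * x j)) ⊗ₜ[k] y j ⊗ₜ[k] z i :=
          Finset.sum_congr rfl fun j _ => step1 j
      _ = ∑ i ∈ s, ∑ j ∈ s, x i ⊗ₜ[k] (z j * (y i * x j)) ⊗ₜ[k] y j ⊗ₜ[k] z i :=
          Finset.sum_comm
      _ = ∑ i ∈ s, ∑ j ∈ s, x i ⊗ₜ[k] (z j * x j) ⊗ₜ[k] (y i * y j) ⊗ₜ[k] z i :=
          Finset.sum_congr rfl fun i _ => step2 i
      _ = ∑ i ∈ s, x i ⊗ₜ[k] (1 : A) ⊗ₜ[k] y i ⊗ₜ[k] z i :=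
          Finset.sum_congr rfl fun i _ => step3 i
  exact main.symm
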